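/- arXiv:1902.00080 — 2 statements merged into one kernel-verified Lean document; each statement's English description precedes it below -/
import Mathlib

section
/- Let d = 6k with k ≥ 2, let 0 < ε ≤ 1/8 and 0 < η < 1/48. Fix i⋆ ∈ [d/3], let M̄ = M_{η,0} (all τ_i = 0) and M = M_{η,τ} with τ_i = 1{i = i⋆}, and let μ be the uniform distribution on the inner clique states {1,…,d/3}. Then max_{i∈[d]} ∑_{j∈[d]} |M(i,j) − M̄(i,j)| = ε, and for every m ≤ d/(120η) and every randomized test T : [d]^m → [0,1] (T(x) being the probability of outputting 1 on input x), E_{M̄,μ}[T(X₁,…,X_m)] + E_{M,μ}[1 − T(X₁,…,X_m)] ≥ 1/10. -/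
open Finset

noncomputable section

/-- A row-stochastic matrix. -/
def IsStochastic {d : ℕ} (M : Matrix (Fin d) (Fin d) ℝ) : Prop :=
  (∀ i j, 0 ≤ M i j) ∧ ∀ i, ∑ j, M i j = 1

/-- A probability distribution on `Fin d`. -/
def IsDist {d : ℕ} (μ : Fin d → ℝ) : Prop :=
  (∀ i, 0 ≤ μ i) ∧ ∑ i, μ i = 1

/-- Probability of a length-`m` trajectory under the Markov chain `(M, μ)`:
`μ(x₁) ∏_{t=1}^{m-1} M(x_t, x_{t+1})`. -/
def trajP {d m : ℕ} (M : Matrix (Fin d) (Fin d) ℝ) (μ : Fin d → ℝ)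
    (x : Fin m → Fin d) : ℝ :=
  (if h : 0 < m then μ (x ⟨0, h⟩) else 1) *
    ∏ t : Fin (m - 1),
      M (x ⟨t.1, by have h2 := t.2; omega⟩) (x ⟨t.1 + 1, by have h2 := t.2; omega⟩)

section gen
variable {d : ℕ} (M : Matrix (Fin d) (Fin d) ℝ) (μ : Fin d → ℝ)

/-- walk product with ℕ-indexed range. -/
def wprod {m : ℕ} (x : Fin m → Fin d) : ℝ :=
  ∏ t ∈ Finset.range (m - 1),
    (if h : t + 1 < m then M (x ⟨t, by omega⟩) (x ⟨t + 1, h⟩) else 1)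

lemma trajP_eq {m : ℕ} (x : Fin m → Fin d) :
    trajP M μ x = (if h : 0 < m then μ (x ⟨0, h⟩) else 1) * wprod M x := by
  unfold trajP wprod
  congr 1
  rw [← Fin.prod_univ_eq_prod_range
    (fun t => if h : t + 1 < m then M (x ⟨t, by omega⟩) (x ⟨t + 1, h⟩) else 1) (m - 1)]
  apply Finset.prod_congr rfl
  intro t _
  have ht : (t : ℕ) + 1 < m := by have := t.2; omega
  rw [dif_pos ht]

lemma trajP_nonneg (hM : ∀ i j, 0 ≤ M i j) (hμ : ∀ i, 0 ≤ μ i) {m : ℕ}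
    (x : Fin m → Fin d) : 0 ≤ trajP M μ x := by
  unfold trajP
  apply mul_nonneg
  · split <;> [exact hμ _; norm_num]
  · exact Finset.prod_nonneg fun t _ => hM _ _

lemma snoc_lt {m : ℕ} (x : Fin (m + 1) → Fin d) (y : Fin d) {t : ℕ} (h : t < m + 1) :
    (Fin.snoc x y : Fin (m + 2) → Fin d) ⟨t, by omega⟩ = x ⟨t, h⟩ := by
  rw [show (⟨t, by omega⟩ : Fin (m + 2)) = Fin.castSucc ⟨t, h⟩ from rfl, Fin.snoc_castSucc]

lemma snoc_last' {m : ℕ} (x : Fin (m + 1) → Fin d) (y : Fin d) :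
    (Fin.snoc x y : Fin (m + 2) → Fin d) ⟨m + 1, by omega⟩ = y := by
  rw [show (⟨m + 1, by omega⟩ : Fin (m + 2)) = Fin.last (m + 1) from rfl, Fin.snoc_last]

lemma trajP_snoc {m : ℕ} (x : Fin (m + 1) → Fin d) (y : Fin d) :
    trajP M μ (Fin.snoc x y) = trajP M μ x * M (x (Fin.last m)) y := by
  rw [trajP_eq, trajP_eq]
  have h0 : (Fin.snoc x y : Fin (m + 2) → Fin d) ⟨0, by omega⟩ = x ⟨0, by omega⟩ :=
    snoc_lt x y (by omega)
  rw [dif_pos (by omega : 0 < m + 2), dif_pos (by omega : 0 < m + 1), h0]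
  have hw : wprod M (Fin.snoc x y : Fin (m + 2) → Fin d)
      = wprod M x * M (x (Fin.last m)) y := by
    unfold wprod
    rw [show m + 2 - 1 = (m + 1 - 1) + 1 by omega, Finset.prod_range_succ]
    congr 1
    · apply Finset.prod_congr rfl
      intro t ht
      rw [Finset.mem_range] at ht
      rw [dif_pos (by omega : t + 1 < m + 2)]
      by_cases h : t + 1 < m + 1
      · rw [dif_pos h, snoc_lt x y (by omega : t < m + 1), snoc_lt x y h]
      · rw [dif_neg h]; omega
    · rw [dif_pos (by omega : (m + 1 - 1) + 1 < m + 2)]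
      have e1 : (m + 1 - 1 : ℕ) = m := by omega
      rw [snoc_lt x y (by omega : m + 1 - 1 < m + 1)]
      have e2 : ((m + 1 - 1) + 1 : ℕ) = m + 1 := by omega
      rw [show (⟨(m + 1 - 1) + 1, by omega⟩ : Fin (m + 2)) = Fin.last (m + 1) by
        apply Fin.ext; simp [e2], Fin.snoc_last]
      exact congrArg (fun i => M (x i) y) (Fin.ext (by simp [e1]))
  rw [hw]; ring

lemma sum_trajP_snoc (hM : ∀ i, ∑ j, M i j = 1) {m : ℕ} (x : Fin (m + 1) → Fin d) :
    ∑ y, trajP M μ (Fin.snoc x y) = trajP M μ x := by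
  simp only [trajP_snoc]
  rw [← Finset.mul_sum, hM, mul_one]

lemma sum_trajP_one (hM : ∀ i, ∑ j, M i j = 1) (hμ : ∑ i, μ i = 1) (m : ℕ) :
    ∑ x : Fin m → Fin d, trajP M μ x = 1 := by
  induction m with
  | zero =>
      rw [Finset.sum_eq_single (fun i => i.elim0)]
      · unfold trajP; simp
      · intro b _ hb; exact absurd (funext fun i => i.elim0) hb
      · intro h; exact absurd (Finset.mem_univ _) h
  | succ n ih =>
      cases n with
      | zero =>
          rw [← Equiv.sum_comp (Equiv.funUnique (Fin 1) (Fin d)).symm]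
          simp only [Equiv.funUnique_symm_apply]
          rw [← hμ]
          apply Finset.sum_congr rfl
          intro i _
          unfold trajP
          simp
      | succ n' =>
          rw [← Equiv.sum_comp (Fin.snocEquiv (fun _ : Fin (n' + 2) => Fin d))
            (trajP M μ), Fintype.sum_prod_type]
          rw [← ih, Finset.sum_comm]
          apply Finset.sum_congr rfl
          intro x _
          exact sum_trajP_snoc M μ hM x

end gen


/-- The block chain `M_{η,τ}` on `d = 6k` states: inner clique `C_η` on states
`1,…,d/3`, connector blocks `R_τ`, `R_τᵀ`, and diagonal outer block `L_τ`. -/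
def Mblock (k : ℕ) (ε η : ℝ) (τ : Fin (2 * k) → ℝ) :
    Matrix (Fin (6 * k)) (Fin (6 * k)) ℝ :=
  Matrix.of fun i j =>
    if hi : i.1 < 2 * k then
      if j.1 < 2 * k then
        (if i.1 = j.1 then 3 / 4 - η else η / (2 * (k : ℝ) - 1))
      else
        (if j.1 = 2 * k + 2 * i.1 then (1 + 4 * τ ⟨i.1, hi⟩ * ε) / 8
         else if j.1 = 2 * k + 2 * i.1 + 1 then (1 - 4 * τ ⟨i.1, hi⟩ * ε) / 8
         else 0)
    else
      if hj : j.1 < 2 * k then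
        (if i.1 = 2 * k + 2 * j.1 then (1 + 4 * τ ⟨j.1, hj⟩ * ε) / 8
         else if i.1 = 2 * k + 2 * j.1 + 1 then (1 - 4 * τ ⟨j.1, hj⟩ * ε) / 8
         else 0)
      else
        (if i.1 = j.1 then
           (if (i.1 - 2 * k) % 2 = 0 then
              (7 - 4 * τ ⟨(i.1 - 2 * k) / 2, by have h2 := i.2; omega⟩ * ε) / 8
            else
              (7 + 4 * τ ⟨(i.1 - 2 * k) / 2, by have h2 := i.2; omega⟩ * ε) / 8)
         else 0)

section gen2
variable {d : ℕ} (M : Matrix (Fin d) (Fin d) ℝ) (μ : Fin d → ℝ)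

lemma marginal (hM : ∀ i, ∑ j, M i j = 1)
    {n m : ℕ} (h1 : 1 ≤ n) (hnm : n ≤ m) (g : (Fin n → Fin d) → ℝ) :
    ∑ x : Fin m → Fin d, g (fun i => x (Fin.castLE hnm i)) * trajP M μ x
      = ∑ y : Fin n → Fin d, g y * trajP M μ y := by
  induction m, hnm using Nat.le_induction with
  | base =>
      apply Finset.sum_congr rfl
      intro x _
      congr 1
  | succ m hnm ih =>
      obtain ⟨m', rfl⟩ : ∃ m', m = m' + 1 := ⟨m - 1, by omega⟩
      rw [← ih]
      rw [← Equiv.sum_comp (Fin.snocEquiv (fun _ : Fin (m' + 2) => Fin d))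
        (fun x => g (fun i => x (Fin.castLE (by omega) i)) * trajP M μ x),
        Fintype.sum_prod_type, Finset.sum_comm]
      apply Finset.sum_congr rfl
      intro x _
      have key : ∀ y : Fin d,
          (fun i => (Fin.snocEquiv (fun _ : Fin (m' + 2) => Fin d) (y, x))
              (Fin.castLE (by omega : n ≤ m' + 2) i))
            = (fun i => x (Fin.castLE hnm i)) := by
        intro y
        funext i
        show (Fin.snoc x y : Fin (m' + 2) → Fin d) (Fin.castLE _ i) = _
        have hi : (i : ℕ) < m' + 1 := by have := i.2; omega
        rw [show (Fin.castLE (by omega : n ≤ m' + 2) i) = Fin.castSucc ⟨i.1, hi⟩ from rfl,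
          Fin.snoc_castSucc]
        rfl
      calc ∑ y, g (fun i => (Fin.snocEquiv (fun _ : Fin (m' + 2) => Fin d) (y, x))
              (Fin.castLE (by omega) i)) * trajP M μ ((Fin.snocEquiv _) (y, x))
          = ∑ y, g (fun i => x (Fin.castLE hnm i)) *
              trajP M μ (Fin.snoc x y) := by
            apply Finset.sum_congr rfl
            intro y _
            rw [key y]
            rfl
        _ = g (fun i => x (Fin.castLE hnm i)) * trajP M μ x := by
            rw [← Finset.mul_sum, sum_trajP_snoc M μ hM]

end gen2

section bounds
variable {d : ℕ} (M : Matrix (Fin d) (Fin d) ℝ) (μ : Fin d → ℝ)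
  (hM0 : ∀ i j, 0 ≤ M i j) (hM1 : ∀ i, ∑ j, M i j = 1)
  (hμ0 : ∀ i, 0 ≤ μ i) (hμ1 : ∑ i, μ i = 1)

lemma first_in (hM1 : ∀ i, ∑ j, M i j = 1) (B : Finset (Fin d)) {m : ℕ} (hm : 1 ≤ m) :
    ∑ x : Fin m → Fin d, (if x ⟨0, by omega⟩ ∈ B then 1 else 0) * trajP M μ x
      = ∑ i ∈ B, μ i := by
  have hmar := marginal M μ hM1 (le_refl 1) hm
    (fun y : Fin 1 → Fin d => if y 0 ∈ B then 1 else 0)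
  rw [show (∑ x : Fin m → Fin d, (if x ⟨0, by omega⟩ ∈ B then 1 else 0) * trajP M μ x)
      = ∑ x : Fin m → Fin d,
        (fun y : Fin 1 → Fin d => if y 0 ∈ B then 1 else 0)
          (fun i => x (Fin.castLE hm i)) * trajP M μ x from rfl, hmar]
  rw [← Equiv.sum_comp (Equiv.funUnique (Fin 1) (Fin d)).symm]
  simp only [Equiv.funUnique_symm_apply]
  have h2 : ∀ i : Fin d, trajP M μ (fun _ : Fin 1 => i) = μ i := by
    intro i; unfold trajP; simp
  simp only [ite_mul, one_mul, zero_mul]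
  refine Eq.trans (Finset.sum_congr rfl fun i _ => ?_)
    (by rw [Finset.sum_ite_mem, Finset.univ_inter] :
      (∑ x : Fin d, (if x ∈ B then μ x else 0)) = ∑ i ∈ B, μ i)
  show (if i ∈ B then trajP M μ (fun _ : Fin 1 => i) else 0) = (if i ∈ B then μ i else 0)
  rw [h2 i]


lemma pair_in (hM0 : ∀ i j, 0 ≤ M i j) (hM1 : ∀ i, ∑ j, M i j = 1)
    (hμ0 : ∀ i, 0 ≤ μ i) (hμ1 : ∑ i, μ i = 1)
    (B : Finset (Fin d)) (c : ℝ) (hc0 : 0 ≤ c) (hc : ∀ i ∉ B, ∑ j ∈ B, M i j ≤ c)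
    {m t : ℕ} (ht : t + 2 ≤ m) :
    ∑ x : Fin m → Fin d,
      (if x ⟨t, by omega⟩ ∉ B ∧ x ⟨t + 1, by omega⟩ ∈ B then 1 else 0) * trajP M μ x
      ≤ c := by
  classical
  have hmar := marginal M μ hM1 (by omega : 1 ≤ t + 2) ht
    (fun y : Fin (t + 2) → Fin d =>
      if y ⟨t, by omega⟩ ∉ B ∧ y ⟨t + 1, by omega⟩ ∈ B then 1 else 0)
  rw [show (∑ x : Fin m → Fin d,
      (if x ⟨t, by omega⟩ ∉ B ∧ x ⟨t + 1, by omega⟩ ∈ B then 1 else 0) * trajP M μ x)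
      = ∑ x : Fin m → Fin d,
        (fun y : Fin (t + 2) → Fin d =>
          if y ⟨t, by omega⟩ ∉ B ∧ y ⟨t + 1, by omega⟩ ∈ B then 1 else 0)
          (fun i => x (Fin.castLE ht i)) * trajP M μ x from rfl, hmar]
  rw [← Equiv.sum_comp (Fin.snocEquiv (fun _ : Fin (t + 2) => Fin d)),
    Fintype.sum_prod_type, Finset.sum_comm]
  have step : ∀ x : Fin (t + 1) → Fin d,
      (∑ y : Fin d,
        (fun z : Fin (t + 2) → Fin d =>
          (if z ⟨t, by omega⟩ ∉ B ∧ z ⟨t + 1, by omega⟩ ∈ B then (1:ℝ) else 0) * trajP M μ z)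
          (Fin.snocEquiv (fun _ => Fin d) (y, x)))
      ≤ trajP M μ x * c := by
    intro x
    have hz : ∀ y : Fin d, (Fin.snocEquiv (fun _ : Fin (t+2) => Fin d) (y, x))
        = Fin.snoc x y := fun y => rfl
    simp only [hz]
    have e1 : ∀ y : Fin d, (Fin.snoc x y : Fin (t+2) → Fin d) ⟨t, by omega⟩
        = x ⟨t, by omega⟩ := by
      intro y
      rw [show (⟨t, by omega⟩ : Fin (t+2)) = Fin.castSucc ⟨t, by omega⟩ from rfl,
        Fin.snoc_castSucc]
    have e2 : ∀ y : Fin d, (Fin.snoc x y : Fin (t+2) → Fin d) ⟨t+1, by omega⟩ = y := by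
      intro y
      rw [show (⟨t+1, by omega⟩ : Fin (t+2)) = Fin.last (t+1) from rfl, Fin.snoc_last]
    simp only [e1, e2, trajP_snoc M μ x]
    have h0 : 0 ≤ trajP M μ x := trajP_nonneg M μ hM0 hμ0 x
    have hxl : x (Fin.last t) = x ⟨t, by omega⟩ := rfl
    by_cases hx : x ⟨t, by omega⟩ ∈ B
    · simp only [hx, not_true_eq_false, false_and, if_false, zero_mul]
      rw [Finset.sum_const, smul_zero]
      positivity
    · simp only [hx, not_false_eq_true, true_and]
      have : ∀ y : Fin d, (if y ∈ B then (1:ℝ) else 0) * (trajP M μ x * M (x (Fin.last t)) y)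
          = trajP M μ x * (if y ∈ B then M (x (Fin.last t)) y else 0) := by
        intro y; split_ifs <;> ring
      rw [Finset.sum_congr rfl fun y _ => this y, ← Finset.mul_sum,
        Finset.sum_ite_mem, Finset.univ_inter]
      exact mul_le_mul_of_nonneg_left (hc _ (by rw [hxl]; exact hx)) h0
  calc ∑ x : Fin (t+1) → Fin d, (∑ y : Fin d,
        (fun z : Fin (t + 2) → Fin d =>
          (if z ⟨t, by omega⟩ ∉ B ∧ z ⟨t + 1, by omega⟩ ∈ B then (1:ℝ) else 0) * trajP M μ z)
          (Fin.snocEquiv (fun _ => Fin d) (y, x)))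
      ≤ ∑ x : Fin (t+1) → Fin d, trajP M μ x * c :=
        Finset.sum_le_sum fun x _ => step x
    _ = c := by rw [← Finset.sum_mul, sum_trajP_one M μ hM1 hμ1, one_mul]

end bounds

set_option maxHeartbeats 1000000 in
lemma avoid {d : ℕ} (M : Matrix (Fin d) (Fin d) ℝ) (μ : Fin d → ℝ)
    (hM0 : ∀ i j, 0 ≤ M i j) (hM1 : ∀ i, ∑ j, M i j = 1)
    (hμ0 : ∀ i, 0 ≤ μ i) (hμ1 : ∑ i, μ i = 1)
    (B : Finset (Fin d)) (c : ℝ) (hc0 : 0 ≤ c) (hc : ∀ i ∉ B, ∑ j ∈ B, M i j ≤ c)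
    {m : ℕ} (hm : 1 ≤ m) [DecidablePred (fun x : Fin m → Fin d => ∃ t : Fin m, t.1 + 1 < m ∧ x t ∈ B)] :
    ∑ x ∈ Finset.univ.filter (fun x : Fin m → Fin d => ∃ t : Fin m, t.1 + 1 < m ∧ x t ∈ B),
      trajP M μ x ≤ (∑ i ∈ B, μ i) + (m - 2 : ℕ) * c := by
  classical
  set F : (Fin m → Fin d) → ℝ := fun x =>
    (if x ⟨0, by omega⟩ ∈ B then 1 else 0)
    + ∑ t : Fin (m - 2), (if x ⟨t.1, by have := t.2; omega⟩ ∉ B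
        ∧ x ⟨t.1 + 1, by have := t.2; omega⟩ ∈ B then 1 else 0) with hF
  have hF0 : ∀ x, 0 ≤ F x := by
    intro x
    apply add_nonneg
    · split <;> norm_num
    · apply Finset.sum_nonneg; intro t _; split <;> norm_num
  have hF1 : ∀ x ∈ Finset.univ.filter
      (fun x : Fin m → Fin d => ∃ t : Fin m, t.1 + 1 < m ∧ x t ∈ B), 1 ≤ F x := by
    intro x hx
    rw [Finset.mem_filter] at hx
    obtain ⟨-, t, ht, htB⟩ := hx
    have xm : ∀ (s : ℕ) (h : s < m) (h2 : s % m < m), x ⟨s % m, h2⟩ = x ⟨s, h⟩ :=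
      fun s h h2 => congrArg x (Fin.ext (Nat.mod_eq_of_lt h))
    have hex : ∃ s : ℕ, s + 1 < m ∧ x ⟨s % m, Nat.mod_lt _ (by omega)⟩ ∈ B := by
      refine ⟨t.1, ht, ?_⟩
      rw [xm t.1 t.2]
      exact htB
    obtain ⟨hs0m, hs0B⟩ := Nat.find_spec hex
    rcases Nat.eq_zero_or_eq_succ_pred (Nat.find hex) with h0 | hsucc
    · rw [h0] at hs0m hs0B
      rw [xm 0 (by omega)] at hs0B
      rw [hF]
      simp only [if_pos hs0B]
      have : (0:ℝ) ≤ ∑ t : Fin (m - 2), (if x ⟨t.1, by have := t.2; omega⟩ ∉ B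
          ∧ x ⟨t.1 + 1, by have := t.2; omega⟩ ∈ B then (1:ℝ) else 0) := by
        apply Finset.sum_nonneg; intro t _; split <;> norm_num
      linarith
    · set s' := (Nat.find hex) - 1 with hs'
      have hseq : Nat.find hex = s' + 1 := hsucc
      have hs'm : s' + 2 < m := by omega
      have hmin : ¬ (s' + 1 < m ∧ x ⟨s' % m, Nat.mod_lt _ (by omega)⟩ ∈ B) :=
        Nat.find_min hex (by omega)
      have hs'B : x ⟨s', by omega⟩ ∉ B := by
        intro hmem
        apply hmin
        refine ⟨by omega, ?_⟩
        rw [xm s' (by omega)]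
        exact hmem
    
      rw [hseq] at hs0B
      rw [xm (s' + 1) (by omega)] at hs0B
      have hterm : (if x ⟨(⟨s', by omega⟩ : Fin (m - 2)).1, by omega⟩ ∉ B
          ∧ x ⟨(⟨s', by omega⟩ : Fin (m - 2)).1 + 1, by omega⟩ ∈ B then (1:ℝ) else 0) = 1 :=
        if_pos ⟨hs'B, hs0B⟩
      have hsum : (1:ℝ) ≤ ∑ t : Fin (m - 2), (if x ⟨t.1, by have := t.2; omega⟩ ∉ B
          ∧ x ⟨t.1 + 1, by have := t.2; omega⟩ ∈ B then (1:ℝ) else 0) := by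
        have hle := Finset.single_le_sum (f := fun t : Fin (m - 2) =>
          (if x ⟨t.1, by have := t.2; omega⟩ ∉ B
            ∧ x ⟨t.1 + 1, by have := t.2; omega⟩ ∈ B then (1:ℝ) else 0))
          (fun t _ => by split <;> norm_num) (Finset.mem_univ ⟨s', by omega⟩)
        dsimp only at hle
        rw [hterm] at hle
        exact hle
      rw [hF]
      beta_reduce
      have : (0:ℝ) ≤ (if x ⟨0, by omega⟩ ∈ B then (1:ℝ) else 0) := by split <;> norm_num
      linarith
  calc ∑ x ∈ Finset.univ.filter
        (fun x : Fin m → Fin d => ∃ t : Fin m, t.1 + 1 < m ∧ x t ∈ B), trajP M μ x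
      ≤ ∑ x ∈ Finset.univ.filter
        (fun x : Fin m → Fin d => ∃ t : Fin m, t.1 + 1 < m ∧ x t ∈ B), F x * trajP M μ x := by
        apply Finset.sum_le_sum
        intro x hx
        exact le_mul_of_one_le_left (trajP_nonneg M μ hM0 hμ0 x) (hF1 x hx)
    _ ≤ ∑ x : Fin m → Fin d, F x * trajP M μ x := by
        apply Finset.sum_le_sum_of_subset_of_nonneg (Finset.filter_subset _ _)
        intro x _ _
        exact mul_nonneg (hF0 x) (trajP_nonneg M μ hM0 hμ0 x)
    _ = (∑ x : Fin m → Fin d, (if x ⟨0, by omega⟩ ∈ B then 1 else 0) * trajP M μ x)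
        + ∑ t : Fin (m - 2), ∑ x : Fin m → Fin d,
            (if x ⟨t.1, by have := t.2; omega⟩ ∉ B
              ∧ x ⟨t.1 + 1, by have := t.2; omega⟩ ∈ B then 1 else 0) * trajP M μ x := by
        rw [hF]
        simp only [add_mul, Finset.sum_add_distrib, Finset.sum_mul]
        rw [Finset.sum_comm]
    _ ≤ (∑ i ∈ B, μ i) + ∑ t : Fin (m - 2), c := by
        apply add_le_add
        · rw [first_in M μ hM1 B hm]
        · apply Finset.sum_le_sum
          intro t _
          exact pair_in M μ hM0 hM1 hμ0 hμ1 B c hc0 hc (by have := t.2; omega)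
    _ = (∑ i ∈ B, μ i) + (m - 2 : ℕ) * c := by
        rw [Finset.sum_const, Finset.card_univ, Fintype.card_fin, nsmul_eq_mul]

lemma sum_ind {n : ℕ} (c : ℕ) (hc : c < n) (v : ℝ) :
    ∑ j : Fin n, (if j.1 = c then v else 0) = v := by
  rw [Fin.sum_univ_eq_sum_range (fun t => if t = c then v else 0) n,
    Finset.sum_ite_eq' (Finset.range n) c (fun _ => v), if_pos (Finset.mem_range.2 hc)]

lemma sum_lt_ind {n : ℕ} (m0 : ℕ) (h : m0 ≤ n) (v : ℝ) :
    ∑ j : Fin n, (if j.1 < m0 then v else 0) = m0 * v := by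
  rw [Fin.sum_univ_eq_sum_range (fun t => if t < m0 then v else 0) n]
  have : ∀ t ∈ Finset.range n, (if t < m0 then v else 0) = if t ∈ Finset.range m0 then v else 0 := by
    intro t _; simp [Finset.mem_range]
  rw [Finset.sum_congr rfl this, Finset.sum_ite_mem]
  have : Finset.range n ∩ Finset.range m0 = Finset.range m0 := by
    ext t; simp only [Finset.mem_inter, Finset.mem_range]; omega
  rw [this, Finset.sum_const, Finset.card_range, nsmul_eq_mul]

section main
variable {k : ℕ} (hk : 2 ≤ k) (ε η : ℝ)

-- Row sums for τ = 0.
lemma M0_rowsum (hk : 2 ≤ k) (i : Fin (6 * k)) :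
    ∑ j, Mblock k ε η (fun _ => 0) i j = 1 := by
  have hkR : (1:ℝ) ≤ (k:ℝ) := by exact_mod_cast Nat.one_le_iff_ne_zero.2 (by omega)
  have h2k : (2 * (k:ℝ) - 1) ≠ 0 := by nlinarith
  by_cases hi : i.1 < 2 * k
  · have hpt : ∀ j : Fin (6 * k), Mblock k ε η (fun _ => 0) i j
        = (if j.1 = i.1 then (3/4 - η) - η / (2 * (k:ℝ) - 1) else 0)
          + (if j.1 < 2 * k then η / (2 * (k:ℝ) - 1) else 0)
          + (if j.1 = 2 * k + 2 * i.1 then 1/8 else 0)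
          + (if j.1 = 2 * k + 2 * i.1 + 1 then 1/8 else 0) := by
      intro j
      simp only [Mblock, Matrix.of_apply, dif_pos hi]
      split_ifs <;> first | ring1 | (exfalso; omega)
    rw [Finset.sum_congr rfl fun j _ => hpt j]
    simp only [Finset.sum_add_distrib]
    rw [sum_ind i.1 (by omega) _, sum_lt_ind (2 * k) (by omega) _,
      sum_ind (2 * k + 2 * i.1) (by omega) _, sum_ind (2 * k + 2 * i.1 + 1) (by omega) _]
    push_cast
    field_simp
    ring
  · have hpt : ∀ j : Fin (6 * k), Mblock k ε η (fun _ => 0) i j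
        = (if j.1 = (i.1 - 2 * k) / 2 then 1/8 else 0)
          + (if j.1 = i.1 then 7/8 else 0) := by
      intro j
      simp only [Mblock, Matrix.of_apply, dif_neg hi]
      have hi2 := i.2
      split_ifs <;> first | ring1 | (exfalso; omega)
    rw [Finset.sum_congr rfl fun j _ => hpt j]
    simp only [Finset.sum_add_distrib]
    have hi2 := i.2
    rw [sum_ind ((i.1 - 2 * k) / 2) (by omega) _, sum_ind i.1 (by omega) _]
    norm_num

end main

section facts
variable {k : ℕ} (ε η : ℝ) (istar : Fin (2 * k))

lemma M_nonneg (hk : 2 ≤ k) (hε0 : 0 < ε) (hε : ε ≤ 1 / 8) (hη0 : 0 < η) (hη : η < 1 / 48)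
    (τ : Fin (2 * k) → ℝ) (hτ0 : ∀ i', 0 ≤ τ i') (hτ1 : ∀ i', τ i' ≤ 1) :
    ∀ i j, 0 ≤ Mblock k ε η τ i j := by
  intro i j
  have hkR : (2:ℝ) ≤ (k:ℝ) := by exact_mod_cast hk
  have a1 : ∀ t : ℝ, 0 ≤ t → t ≤ 1 → (0:ℝ) ≤ (1 + 4 * t * ε) / 8 := by
    intro t h0 h1; nlinarith
  have a2 : ∀ t : ℝ, 0 ≤ t → t ≤ 1 → (0:ℝ) ≤ (1 - 4 * t * ε) / 8 := by
    intro t h0 h1; nlinarith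
  have a3 : ∀ t : ℝ, 0 ≤ t → t ≤ 1 → (0:ℝ) ≤ (7 - 4 * t * ε) / 8 := by
    intro t h0 h1; nlinarith
  have a4 : ∀ t : ℝ, 0 ≤ t → t ≤ 1 → (0:ℝ) ≤ (7 + 4 * t * ε) / 8 := by
    intro t h0 h1; nlinarith
  simp only [Mblock, Matrix.of_apply]
  split_ifs <;> first
    | exact div_nonneg (by linarith) (by linarith)
    | exact a1 _ (hτ0 _) (hτ1 _)
    | exact a2 _ (hτ0 _) (hτ1 _)
    | exact a3 _ (hτ0 _) (hτ1 _)
    | exact a4 _ (hτ0 _) (hτ1 _)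
    | linarith

lemma rows_eq (i : Fin (6 * k)) (hB1 : i.1 ≠ istar.1) (hB2 : i.1 ≠ 2 * k + 2 * istar.1)
    (hB3 : i.1 ≠ 2 * k + 2 * istar.1 + 1) (j : Fin (6 * k)) :
    Mblock k ε η (fun i' => if i' = istar then 1 else 0) i j
      = Mblock k ε η (fun _ => 0) i j := by
  simp only [Mblock, Matrix.of_apply, Fin.ext_iff]
  split_ifs <;> first | ring1 | (exfalso; omega)

end facts

section bset
variable {k : ℕ} (hk : 2 ≤ k) (ε η : ℝ) (istar : Fin (2 * k))

def bb1 (hk : 2 ≤ k) (istar : Fin (2 * k)) : Fin (6 * k) :=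
  ⟨istar.1, by have := istar.2; omega⟩
def bb2 (hk : 2 ≤ k) (istar : Fin (2 * k)) : Fin (6 * k) :=
  ⟨2 * k + 2 * istar.1, by have := istar.2; omega⟩
def bb3 (hk : 2 ≤ k) (istar : Fin (2 * k)) : Fin (6 * k) :=
  ⟨2 * k + 2 * istar.1 + 1, by have := istar.2; omega⟩

def Bset (hk : 2 ≤ k) (istar : Fin (2 * k)) : Finset (Fin (6 * k)) :=
  {bb1 hk istar, bb2 hk istar, bb3 hk istar}

lemma mem_Bset_iff (i : Fin (6 * k)) :
    i ∈ Bset hk istar ↔ i.1 = istar.1 ∨ i.1 = 2 * k + 2 * istar.1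
      ∨ i.1 = 2 * k + 2 * istar.1 + 1 := by
  simp [Bset, bb1, bb2, bb3, Fin.ext_iff]

lemma colB (hη0 : 0 < η) (i : Fin (6 * k)) (hi : i ∉ Bset hk istar) :
    ∑ j ∈ Bset hk istar, Mblock k ε η (fun _ => 0) i j ≤ η / (2 * (k : ℝ) - 1) := by
  have hkR : (2:ℝ) ≤ (k:ℝ) := by exact_mod_cast hk
  rw [mem_Bset_iff] at hi
  push_neg at hi
  obtain ⟨h1, h2, h3⟩ := hi
  have hB : Bset hk istar = insert (bb1 hk istar) (insert (bb2 hk istar) {bb3 hk istar}) := rfl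
  have hne12 : bb1 hk istar ∉ insert (bb2 hk istar) ({bb3 hk istar} : Finset (Fin (6*k))) := by
    simp [bb1, bb2, bb3, Fin.ext_iff]
    constructor <;> (intro h; have := istar.2; omega)
  have hne23 : bb2 hk istar ∉ ({bb3 hk istar} : Finset (Fin (6*k))) := by
    simp [bb2, bb3, Fin.ext_iff]
  rw [hB, Finset.sum_insert hne12, Finset.sum_insert hne23, Finset.sum_singleton]
  have e1 : Mblock k ε η (fun _ => 0) i (bb1 hk istar)
      = if i.1 < 2 * k then η / (2 * (k:ℝ) - 1) else 0 := by
    simp only [Mblock, Matrix.of_apply, bb1]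
    have := istar.2
    split_ifs <;> first | ring1 | (exfalso; omega)
  have e2 : Mblock k ε η (fun _ => 0) i (bb2 hk istar) = 0 := by
    simp only [Mblock, Matrix.of_apply, bb2]
    have := istar.2
    split_ifs <;> first | ring1 | (exfalso; omega)
  have e3 : Mblock k ε η (fun _ => 0) i (bb3 hk istar) = 0 := by
    simp only [Mblock, Matrix.of_apply, bb3]
    have := istar.2
    split_ifs <;> first | ring1 | (exfalso; omega)
  rw [e1, e2, e3]
  split_ifs
  · linarith
  · have : (0:ℝ) ≤ η / (2 * (k:ℝ) - 1) := div_nonneg (by linarith) (by linarith)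
    linarith

lemma muB :
    ∑ i ∈ Bset hk istar, (if i.1 < 2 * k then 1 / (2 * (k : ℝ)) else 0)
      = 1 / (2 * (k : ℝ)) := by
  have hB : Bset hk istar = insert (bb1 hk istar) (insert (bb2 hk istar) {bb3 hk istar}) := rfl
  have hne12 : bb1 hk istar ∉ insert (bb2 hk istar) ({bb3 hk istar} : Finset (Fin (6*k))) := by
    simp [bb1, bb2, bb3, Fin.ext_iff]
    constructor <;> (intro h; have := istar.2; omega)
  have hne23 : bb2 hk istar ∉ ({bb3 hk istar} : Finset (Fin (6*k))) := by
    simp [bb2, bb3, Fin.ext_iff]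
  rw [hB, Finset.sum_insert hne12, Finset.sum_insert hne23, Finset.sum_singleton]
  have h1 : (bb1 hk istar).1 < 2 * k := istar.2
  have h2 : ¬ (bb2 hk istar).1 < 2 * k := by simp [bb2]
  have h3 : ¬ (bb3 hk istar).1 < 2 * k := by simp [bb3]; omega
  rw [if_pos h1, if_neg h2, if_neg h3]
  ring

end bset

section delta
variable {k : ℕ} (hk : 2 ≤ k) (ε η : ℝ) (istar : Fin (2 * k))

lemma abs_ind_pair (P Q : Prop) [Decidable P] [Decidable Q] (hPQ : ¬(P ∧ Q)) (v : ℝ)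
    (e1 e2 : ℝ) (he1 : |e1| = v) (he2 : |e2| = v) :
    |(if P then e1 else 0) + (if Q then e2 else 0)|
      = (if P then v else 0) + (if Q then v else 0) := by
  by_cases hP : P <;> by_cases hQ : Q
  · exact absurd ⟨hP, hQ⟩ hPQ
  · simp [hP, hQ, he1]
  · simp [hP, hQ, he2]
  · simp [hP, hQ]

lemma absrow_aux (hε0 : 0 < ε) (i : Fin (6 * k)) (c1 c2 : ℕ) (hc1 : c1 < 6 * k)
    (hc2 : c2 < 6 * k) (hne : c1 ≠ c2) (e1 e2 : ℝ) (he1 : |e1| = ε / 2) (he2 : |e2| = ε / 2)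
    (hd : ∀ j : Fin (6 * k),
      Mblock k ε η (fun i' => if i' = istar then 1 else 0) i j
        - Mblock k ε η (fun _ => 0) i j
        = (if j.1 = c1 then e1 else 0) + (if j.1 = c2 then e2 else 0)) :
    ∑ j, |Mblock k ε η (fun i' => if i' = istar then 1 else 0) i j
      - Mblock k ε η (fun _ => 0) i j| = ε := by
  have hpt : ∀ j : Fin (6 * k),
      |Mblock k ε η (fun i' => if i' = istar then 1 else 0) i j
        - Mblock k ε η (fun _ => 0) i j|
      = (if j.1 = c1 then ε / 2 else 0) + (if j.1 = c2 then ε / 2 else 0) := by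
    intro j
    rw [hd j]
    exact abs_ind_pair _ _ (by omega) (ε / 2) e1 e2 he1 he2
  rw [Finset.sum_congr rfl fun j _ => hpt j, Finset.sum_add_distrib,
    sum_ind c1 hc1 _, sum_ind c2 hc2 _]
  ring

lemma absrow_eq (hε0 : 0 < ε) :
    ∑ j, |Mblock k ε η (fun i' => if i' = istar then 1 else 0) (bb1 hk istar) j
      - Mblock k ε η (fun _ => 0) (bb1 hk istar) j| = ε := by
  have his := istar.2
  refine absrow_aux ε η istar hε0 _ (2 * k + 2 * istar.1) (2 * k + 2 * istar.1 + 1)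
    (by omega) (by omega) (by omega) (ε / 2) (-(ε / 2))
    (abs_of_nonneg (by linarith)) (by rw [abs_neg]; exact abs_of_nonneg (by linarith)) ?_
  intro j
  simp only [Mblock, Matrix.of_apply, Fin.ext_iff, bb1]
  split_ifs <;> first | ring1 | (exfalso; omega)

lemma absrow_le (hε0 : 0 < ε) (i : Fin (6 * k)) :
    ∑ j, |Mblock k ε η (fun i' => if i' = istar then 1 else 0) i j
      - Mblock k ε η (fun _ => 0) i j| ≤ ε := by
  have his := istar.2
  by_cases h1 : i.1 = istar.1
  · refine le_of_eq (absrow_aux ε η istar hε0 i (2 * k + 2 * istar.1) (2 * k + 2 * istar.1 + 1)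
      (by omega) (by omega) (by omega) (ε / 2) (-(ε / 2))
      (abs_of_nonneg (by linarith)) (by rw [abs_neg]; exact abs_of_nonneg (by linarith)) ?_)
    intro j
    simp only [Mblock, Matrix.of_apply, Fin.ext_iff]
    split_ifs <;> first | ring1 | (exfalso; omega)
  by_cases h2 : i.1 = 2 * k + 2 * istar.1
  · refine le_of_eq (absrow_aux ε η istar hε0 i istar.1 (2 * k + 2 * istar.1)
      (by omega) (by omega) (by omega) (ε / 2) (-(ε / 2))
      (abs_of_nonneg (by linarith)) (by rw [abs_neg]; exact abs_of_nonneg (by linarith)) ?_)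
    intro j
    simp only [Mblock, Matrix.of_apply, Fin.ext_iff]
    split_ifs <;> first | ring1 | (exfalso; omega)
  by_cases h3 : i.1 = 2 * k + 2 * istar.1 + 1
  · refine le_of_eq (absrow_aux ε η istar hε0 i istar.1 (2 * k + 2 * istar.1 + 1)
      (by omega) (by omega) (by omega) (-(ε / 2)) (ε / 2)
      (by rw [abs_neg]; exact abs_of_nonneg (by linarith)) (abs_of_nonneg (by linarith)) ?_)
    intro j
    simp only [Mblock, Matrix.of_apply, Fin.ext_iff]
    split_ifs <;> first | ring1 | (exfalso; omega)
  · have hpt : ∀ j : Fin (6 * k),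
        |Mblock k ε η (fun i' => if i' = istar then 1 else 0) i j
          - Mblock k ε η (fun _ => 0) i j| = 0 := by
      intro j
      rw [rows_eq ε η istar i h1 h2 h3 j, sub_self, abs_zero]
    rw [Finset.sum_congr rfl fun j _ => hpt j, Finset.sum_const, smul_zero]
    linarith

end delta


/-- Lower bound construction for the `Ω(d·t_mix)` bound: the reference chain
`M_{η,0}` and the alternative `M_{η,τ}` with `τ_i = 1{i = i⋆}` are at distance
`ε`, yet no test of a trajectory of length `m ≤ d/(120η)` can distinguish them
with total error below `1/10`. -/
theorem markov_identity_testing_mixing_lower_bound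
    (k : ℕ) (hk : 2 ≤ k) (ε η : ℝ) (hε0 : 0 < ε) (hε : ε ≤ 1 / 8)
    (hη0 : 0 < η) (hη : η < 1 / 48) (istar : Fin (2 * k)) :
    (⨆ i : Fin (6 * k), ∑ j, |Mblock k ε η (fun i' => if i' = istar then 1 else 0) i j
        - Mblock k ε η (fun _ => 0) i j|) = ε ∧
    ∀ m : ℕ, (m : ℝ) ≤ (6 * (k : ℝ)) / (120 * η) →
      ∀ T : (Fin m → Fin (6 * k)) → ℝ, (∀ x, 0 ≤ T x ∧ T x ≤ 1) →
        1 / 10 ≤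
          (∑ x, trajP (Mblock k ε η (fun _ => 0))
              (fun i : Fin (6 * k) => if i.1 < 2 * k then 1 / (2 * (k : ℝ)) else 0) x * T x) +
            ∑ x, trajP (Mblock k ε η (fun i' => if i' = istar then 1 else 0))
              (fun i : Fin (6 * k) => if i.1 < 2 * k then 1 / (2 * (k : ℝ)) else 0) x
                * (1 - T x) := by
  classical
  have hkR : (2 : ℝ) ≤ (k : ℝ) := by exact_mod_cast hk
  have his := istar.2
  set M1 := Mblock k ε η (fun i' => if i' = istar then 1 else 0) with hM1def
  set M0 := Mblock k ε η (fun _ => 0) with hM0def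
  set μ := fun i : Fin (6 * k) => if i.1 < 2 * k then 1 / (2 * (k : ℝ)) else 0 with hμdef
  have hM0nn : ∀ i j, 0 ≤ M0 i j := by
    rw [hM0def]
    exact M_nonneg ε η hk hε0 hε hη0 hη _ (fun _ => le_refl 0) (fun _ => by norm_num)
  have hM1nn : ∀ i j, 0 ≤ M1 i j := by
    rw [hM1def]
    exact M_nonneg ε η hk hε0 hε hη0 hη _
      (fun i' => by split <;> norm_num)
      (fun i' => by split <;> norm_num)
  have hM0row : ∀ i, ∑ j, M0 i j = 1 := by
    rw [hM0def]; exact M0_rowsum ε η hk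
  have hμ0 : ∀ i, 0 ≤ μ i := by
    intro i
    rw [hμdef]
    have h2kpos : (0:ℝ) < 2 * (k:ℝ) := by linarith
    show (0:ℝ) ≤ if i.1 < 2 * k then 1 / (2 * (k:ℝ)) else 0
    split
    · positivity
    · exact le_refl 0
  have hμ1 : ∑ i, μ i = 1 := by
    rw [hμdef]
    rw [sum_lt_ind (2 * k) (by omega) (1 / (2 * (k : ℝ)))]
    push_cast
    field_simp
  haveI : Nonempty (Fin (6 * k)) := ⟨⟨0, by omega⟩⟩
  constructor
  · apply le_antisymm
    · exact ciSup_le (fun i => absrow_le ε η istar hε0 i)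
    · calc ε = ∑ j, |M1 (bb1 hk istar) j - M0 (bb1 hk istar) j| :=
            (absrow_eq hk ε η istar hε0).symm
        _ ≤ ⨆ i, ∑ j, |M1 i j - M0 i j| :=
            le_ciSup (f := fun i : Fin (6 * k) => ∑ j, |M1 i j - M0 i j|)
              (Set.Finite.bddAbove (Set.finite_range _)) (bb1 hk istar)
  · intro m hm T hT
    rcases Nat.eq_zero_or_pos m with rfl | hm1
    · have e : ∀ f : (Fin 0 → Fin (6 * k)) → ℝ,
          ∑ x : Fin 0 → Fin (6 * k), f x = f (fun i => i.elim0) := by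
        intro f
        apply Finset.sum_eq_single
        · intro b _ hb; exact absurd (funext fun i => i.elim0) hb
        · intro h; exact absurd (Finset.mem_univ _) h
      rw [e, e]
      have h0 : trajP M0 μ (fun i : Fin 0 => i.elim0) = 1 := by unfold trajP; simp
      have h1 : trajP M1 μ (fun i : Fin 0 => i.elim0) = 1 := by unfold trajP; simp
      rw [h0, h1]
      obtain ⟨hT0, hT1⟩ := hT (fun i : Fin 0 => i.elim0)
      linarith
    · set B := Bset hk istar with hBdef
      set c := η / (2 * (k : ℝ) - 1) with hcdef
      have hc0 : 0 ≤ c := div_nonneg (le_of_lt hη0) (by linarith)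
      have hcB : ∀ i ∉ B, ∑ j ∈ B, M0 i j ≤ c := fun i hi => colB hk ε η istar hη0 i hi
      have hμB : ∑ i ∈ B, μ i = 1 / (2 * (k : ℝ)) := muB hk istar
      have havoid := avoid M0 μ hM0nn hM0row hμ0 hμ1 B c hc0 hcB hm1
      have hm2R : ((m - 2 : ℕ) : ℝ) ≤ (m : ℝ) := Nat.cast_le.2 (Nat.sub_le m 2)
      have hbound : (∑ i ∈ B, μ i) + ((m - 2 : ℕ) : ℝ) * c ≤ 1 / 4 + 1 / 30 := by
        rw [hμB]
        have h2k1 : (0 : ℝ) < 2 * (k : ℝ) - 1 := by linarith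
        have hmc : ((m - 2 : ℕ) : ℝ) * c ≤ (6 * (k : ℝ) / (120 * η)) * c :=
          mul_le_mul_of_nonneg_right (le_trans hm2R hm) hc0
        have hval : (6 * (k : ℝ) / (120 * η)) * c = (k : ℝ) / (20 * (2 * (k : ℝ) - 1)) := by
          rw [hcdef]
          field_simp
          ring
        have hfin : (k : ℝ) / (20 * (2 * (k : ℝ) - 1)) ≤ 1 / 30 := by
          rw [div_le_div_iff₀ (by linarith) (by norm_num)]
          linarith
        have h14 : 1 / (2 * (k : ℝ)) ≤ 1 / 4 := by
          rw [div_le_div_iff₀ (by linarith) (by norm_num)]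
          linarith
        linarith
      set Good := Finset.univ.filter
        (fun x : Fin m → Fin (6 * k) => ¬ ∃ t : Fin m, t.1 + 1 < m ∧ x t ∈ B) with hGdef
      have hsplit : ∑ x ∈ Good, trajP M0 μ x
          = 1 - ∑ x ∈ Finset.univ.filter
              (fun x : Fin m → Fin (6 * k) => ∃ t : Fin m, t.1 + 1 < m ∧ x t ∈ B),
              trajP M0 μ x := by
        have hh := Finset.sum_filter_add_sum_filter_not Finset.univ
          (fun x : Fin m → Fin (6 * k) => ∃ t : Fin m, t.1 + 1 < m ∧ x t ∈ B) (trajP M0 μ)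
        rw [sum_trajP_one M0 μ hM0row hμ1 m] at hh
        rw [hGdef]
        linarith
      have hGood : (43 : ℝ) / 60 ≤ ∑ x ∈ Good, trajP M0 μ x := by
        rw [hsplit]
        linarith
      have heq : ∀ x ∈ Good, trajP M1 μ x = trajP M0 μ x := by
        intro x hx
        rw [hGdef, Finset.mem_filter] at hx
        have hx2 := hx.2
        push_neg at hx2
        unfold trajP
        congr 1
        apply Finset.prod_congr rfl
        intro t _
        have ht2 := t.2
        have htm : t.1 + 1 < m := by omega
        have hnB := hx2 ⟨t.1, by omega⟩ htm
        rw [mem_Bset_iff] at hnB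
        push_neg at hnB
        exact rows_eq ε η istar _ hnB.1 hnB.2.1 hnB.2.2 _
      calc (1 : ℝ) / 10 ≤ 43 / 60 := by norm_num
        _ ≤ ∑ x ∈ Good, trajP M0 μ x := hGood
        _ = ∑ x ∈ Good, (trajP M0 μ x * T x + trajP M1 μ x * (1 - T x)) := by
            apply Finset.sum_congr rfl
            intro x hx
            rw [heq x hx]
            ring
        _ = (∑ x ∈ Good, trajP M0 μ x * T x) + ∑ x ∈ Good, trajP M1 μ x * (1 - T x) :=
            Finset.sum_add_distrib
        _ ≤ (∑ x, trajP M0 μ x * T x) + ∑ x, trajP M1 μ x * (1 - T x) := by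
            apply add_le_add <;>
              apply Finset.sum_le_sum_of_subset_of_nonneg (Finset.filter_subset _ _)
            · intro x _ _
              exact mul_nonneg (trajP_nonneg M0 μ hM0nn hμ0 x) (hT x).1
            · intro x _ _
              exact mul_nonneg (trajP_nonneg M1 μ hM1nn hμ0 x) (by linarith [(hT x).2])

end
end

section
/- Fix d ≥ 2, 0 < p⋆ ≤ 1/(2(d+1)), and η ∈ Δ_d, and let X₁,…,X_m be a trajectory drawn from (M_η, p). Let N_{d+1} = ∑_{t=1}^m 1{X_t = d+1}. Then P_{M_η,p}(N_{d+1} = n) does not depend on η and equals: (1−p⋆)^m if n = 0; p⋆^n (1−p⋆)^{m−2n} [ C(m−n+1, n) − p⋆·C(m−n, n−1) ] if 1 ≤ n and 2n ≤ m; p⋆^n if 2n = m+1; and 0 if 2n > m+1. -/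
open Finset

noncomputable section

/-- The distribution `p` on `[d+1]`: `p(d+1) = p⋆`, `p(i) = (1-p⋆)/d` for `i ∈ [d]`. -/
def pInit (d : ℕ) (ps : ℝ) : Fin (d + 1) → ℝ :=
  fun i => if i.1 = d then ps else (1 - ps) / d

/-- The chain `M_η ∈ G_{p⋆}`: rows `1,…,d` equal `p`, row `d+1` is `(η(1),…,η(d),0)`. -/
def MG (d : ℕ) (ps : ℝ) (η : Fin d → ℝ) : Matrix (Fin (d + 1)) (Fin (d + 1)) ℝ :=
  Matrix.of fun i j =>
    if i.1 = d then (if h : j.1 = d then 0 else η ⟨j.1, by have h2 := j.2; omega⟩)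
    else pInit d ps j

/-- Number of visits to state `d+1` in a trajectory. -/
def Nlast (d m : ℕ) (x : Fin m → Fin (d + 1)) : ℕ :=
  (Finset.univ.filter (fun t => (x t).1 = d)).card



def etaExt (d : ℕ) (η : Fin d → ℝ) : Fin (d + 1) → ℝ :=
  fun j => if h : j.1 = d then 0 else η ⟨j.1, by have h2 := j.2; omega⟩

def Fsum (d m : ℕ) (ps : ℝ) (η : Fin d → ℝ) (μ : Fin (d + 1) → ℝ) (n : ℕ) : ℝ :=
  ∑ x ∈ Finset.univ.filter (fun x : Fin m → Fin (d + 1) => Nlast d m x = n),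
    trajP (MG d ps η) μ x

lemma trajP_zero {D : ℕ} (M : Matrix (Fin D) (Fin D) ℝ) (μ : Fin D → ℝ)
    (x : Fin 0 → Fin D) : trajP M μ x = 1 := by
  unfold trajP
  rw [dif_neg (lt_irrefl 0), one_mul]
  apply Finset.prod_eq_one
  intro t _
  exact absurd t.2 (by omega)

lemma trajP_eq_s5 {D m : ℕ} (M : Matrix (Fin D) (Fin D) ℝ) (μ : Fin D → ℝ)
    (x : Fin (m + 1) → Fin D) :
    trajP M μ x = μ (x 0) * ∏ t : Fin m, M (x t.castSucc) (x t.succ) := by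
  unfold trajP
  rw [dif_pos (Nat.succ_pos m)]
  refine congrArg₂ (· * ·) (congrArg μ (congrArg x (Fin.ext (by simp)))) ?_
  apply Finset.prod_congr rfl
  intro t _
  exact congrArg₂ M (congrArg x (Fin.ext (by simp))) (congrArg x (Fin.ext (by simp)))

lemma trajP_succ {D m : ℕ} (M : Matrix (Fin D) (Fin D) ℝ) (μ : Fin D → ℝ)
    (x : Fin (m + 1) → Fin D) :
    trajP M μ x = μ (x 0) * trajP M (fun j => M (x 0) j) (Fin.tail x) := by
  cases m with
  | zero => rw [trajP_eq_s5, trajP_zero]; simp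
  | succ k =>
    rw [trajP_eq_s5, trajP_eq_s5, Fin.prod_univ_succ]
    simp only [Fin.tail]
    refine congrArg₂ (· * ·) rfl (congrArg₂ (· * ·) ?_ ?_)
    · exact congrArg₂ M (congrArg x (Fin.ext (by simp))) rfl
    · apply Finset.prod_congr rfl
      intro t _
      exact congrArg₂ M (congrArg x (Fin.ext rfl)) rfl

lemma Nlast_succ (d m : ℕ) (x : Fin (m + 1) → Fin (d + 1)) :
    Nlast d (m + 1) x = (if (x 0).1 = d then 1 else 0) + Nlast d m (Fin.tail x) := by
  unfold Nlast
  rw [Finset.card_filter, Finset.card_filter, Fin.sum_univ_succ]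
  simp [Fin.tail]
  rw [Finset.card_filter]
  rfl

lemma consEquiv_eq {d m : ℕ} (a : Fin (d + 1)) (x : Fin m → Fin (d + 1)) :
    (Fin.consEquiv (fun _ : Fin (m + 1) => Fin (d + 1))) (a, x) = Fin.cons a x := rfl

lemma MG_row_castSucc (d : ℕ) (ps : ℝ) (η : Fin d → ℝ) (i : Fin d) :
    (fun j => MG d ps η (Fin.castSucc i) j) = pInit d ps := by
  funext j
  simp only [MG, Matrix.of_apply]
  exact if_neg (Nat.ne_of_lt i.2)

lemma MG_row_last (d : ℕ) (ps : ℝ) (η : Fin d → ℝ) :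
    (fun j => MG d ps η (Fin.last d) j) = etaExt d η := by
  funext j
  simp only [MG, Matrix.of_apply]
  rw [if_pos (show ((Fin.last d) : Fin (d + 1)).1 = d from rfl)]
  rfl

lemma pInit_castSucc (d : ℕ) (ps : ℝ) (i : Fin d) :
    pInit d ps (Fin.castSucc i) = (1 - ps) / d :=
  if_neg (Nat.ne_of_lt i.2)

lemma pInit_last (d : ℕ) (ps : ℝ) : pInit d ps (Fin.last d) = ps :=
  if_pos (show ((Fin.last d) : Fin (d + 1)).1 = d from rfl)

lemma etaExt_castSucc (d : ℕ) (η : Fin d → ℝ) (i : Fin d) :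
    etaExt d η (Fin.castSucc i) = η i := by
  unfold etaExt
  rw [dif_neg (Nat.ne_of_lt (show ((Fin.castSucc i) : Fin (d + 1)).1 < d from i.2))]
  exact congrArg η (Fin.ext rfl)

lemma etaExt_last (d : ℕ) (η : Fin d → ℝ) : etaExt d η (Fin.last d) = 0 :=
  dif_pos (show ((Fin.last d) : Fin (d + 1)).1 = d from rfl)

lemma Fsum_zero (d : ℕ) (ps : ℝ) (η : Fin d → ℝ) (μ : Fin (d + 1) → ℝ) (n : ℕ) :
    Fsum d 0 ps η μ n = if n = 0 then 1 else 0 := by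
  unfold Fsum
  rw [Finset.sum_filter, Finset.univ_unique, Finset.sum_singleton, trajP_zero]
  simp [Nlast, eq_comm]

lemma Fsum_succ (d m : ℕ) (ps : ℝ) (η : Fin d → ℝ) (μ : Fin (d + 1) → ℝ) (n : ℕ) :
    Fsum d (m + 1) ps η μ n =
      (∑ i : Fin d, μ (Fin.castSucc i)) * Fsum d m ps η (pInit d ps) n +
        μ (Fin.last d) * (if n = 0 then 0 else Fsum d m ps η (etaExt d η) (n - 1)) := by
  unfold Fsum
  rw [Finset.sum_filter,
    ← Equiv.sum_comp (Fin.consEquiv (fun _ : Fin (m + 1) => Fin (d + 1)))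
      (fun x => if Nlast d (m + 1) x = n then trajP (MG d ps η) μ x else 0),
    Fintype.sum_prod_type]
  simp only [consEquiv_eq, trajP_succ, Nlast_succ, Fin.cons_zero, Fin.tail_cons]
  rw [Fin.sum_univ_castSucc]
  congr 1
  · rw [Finset.sum_mul]
    apply Finset.sum_congr rfl
    intro i _
    rw [MG_row_castSucc]
    have hne : ¬ ((Fin.castSucc i : Fin (d + 1)).1 = d) := Nat.ne_of_lt i.2
    simp only [if_neg hne, zero_add]
    rw [Finset.sum_filter, Finset.mul_sum]
    apply Finset.sum_congr rfl
    intro x _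
    split <;> ring
  · rw [MG_row_last]
    have hl : ((Fin.last d : Fin (d + 1)).1 = d) := rfl
    simp only [if_pos hl]
    cases n with
    | zero =>
      rw [if_pos rfl, mul_zero]
      apply Finset.sum_eq_zero
      intro x _
      rw [if_neg (by omega)]
    | succ k =>
      simp only [Nat.succ_ne_zero, if_false, Nat.add_sub_cancel]
      have hiff : ∀ a : ℕ, (1 + a = k + 1) ↔ (a = k) := fun a => by omega
      simp only [hiff]
      rw [Finset.sum_filter, Finset.mul_sum]
      apply Finset.sum_congr rfl
      intro x _
      split <;> ring


def gFun (ps : ℝ) (m n : ℕ) : ℝ :=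
  if n = 0 then (1 - ps) ^ m
  else if 2 * n ≤ m then
    ps ^ n * (1 - ps) ^ (m - 2 * n) *
      (((m - n + 1).choose n : ℝ) - ps * ((m - n).choose (n - 1) : ℝ))
  else if 2 * n = m + 1 then ps ^ n
  else 0

def gchoose (n a : ℕ) : ℝ := if n = 0 then 0 else (a.choose (n - 1) : ℝ)

lemma gchoose_succ (n a : ℕ) : gchoose (n + 1) a = (a.choose n : ℝ) := by
  simp [gchoose]

lemma gchoose_self (n : ℕ) : gchoose n n = (n : ℝ) := by
  cases n with
  | zero => simp [gchoose]
  | succ k => simp [gchoose, Nat.choose_succ_self_right]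

lemma pascalR (a k : ℕ) : (((a + 1).choose k : ℕ) : ℝ) = (a.choose k : ℝ) + gchoose k a := by
  cases k with
  | zero => simp [gchoose]
  | succ s =>
    rw [Nat.choose_succ_succ]
    push_cast
    rw [gchoose_succ]
    ring

lemma gFun_eq_of (ps : ℝ) {m n k a : ℕ} (h : 2 * n ≤ m) (hk : m - 2 * n = k)
    (ha : m - n = a) :
    gFun ps m n = ps ^ n * (1 - ps) ^ k * (((a + 1).choose n : ℝ) - ps * gchoose n a) := by
  subst hk ha
  cases n with
  | zero => simp [gFun, gchoose]
  | succ s =>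
    rw [gFun, if_neg (by omega), if_pos h, gchoose_succ]
    have : m - (s + 1) + 1 = m - (s + 1) + 1 := rfl
    norm_num

lemma gFun_eq_mid (ps : ℝ) {m n : ℕ} (h : 2 * n = m + 1) : gFun ps m n = ps ^ n := by
  rw [gFun, if_neg (by omega), if_neg (by omega), if_pos h]

lemma gFun_eq_zero (ps : ℝ) {m n : ℕ} (h : m + 1 < 2 * n) : gFun ps m n = 0 := by
  rw [gFun, if_neg (by omega), if_neg (by omega), if_neg (by omega)]

lemma g_rec (ps : ℝ) (m n : ℕ) :
    gFun ps (m + 2) (n + 1) = (1 - ps) * gFun ps (m + 1) (n + 1) + ps * gFun ps m n := by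
  rcases le_or_gt (2 * n) m with h | h
  · rcases eq_or_lt_of_le h with h0 | h1
    · -- A2 : m = 2n
      obtain rfl : m = 2 * n := h0.symm
      rw [gFun_eq_of ps (by omega) (show 2*n+2 - 2*(n+1) = 0 by omega)
            (show 2*n+2 - (n+1) = n+1 by omega),
          gFun_eq_mid ps (show 2*(n+1) = (2*n+1) + 1 by omega),
          gFun_eq_of ps (le_refl _) (show 2*n - 2*n = 0 by omega)
            (show 2*n - n = n by omega),
          gchoose_succ, gchoose_self]
      rw [Nat.choose_succ_self_right, Nat.choose_succ_self_right]
      push_cast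
      ring
    · -- A1 : m = 2n + j + 1
      obtain ⟨j, rfl⟩ : ∃ j, m = 2 * n + j + 1 := ⟨m - 2 * n - 1, by omega⟩
      rw [gFun_eq_of ps (by omega) (show 2*n+j+1+2 - 2*(n+1) = j+1 by omega)
            (show 2*n+j+1+2 - (n+1) = n+j+1+1 by omega),
          gFun_eq_of ps (by omega) (show 2*n+j+1+1 - 2*(n+1) = j by omega)
            (show 2*n+j+1+1 - (n+1) = n+j+1 by omega),
          gFun_eq_of ps (by omega) (show 2*n+j+1 - 2*n = j+1 by omega)
            (show 2*n+j+1 - n = n+j+1 by omega)]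
      rw [pascalR (n+j+1+1) (n+1)]
      rw [gchoose_succ, gchoose_succ]
      rw [pascalR (n+j+1) n]
      ring
  · rcases eq_or_ne (m + 1) (2 * n) with h2 | h3
    · -- B : n = k+1, m = 2k+1
      obtain ⟨k, rfl⟩ : ∃ k, n = k + 1 := ⟨n - 1, by omega⟩
      obtain rfl : m = 2 * k + 1 := by omega
      rw [gFun_eq_mid ps (show 2*(k+1+1) = (2*k+1+2) + 1 by omega),
          gFun_eq_zero ps (show (2*k+1+1) + 1 < 2*(k+1+1) by omega),
          gFun_eq_mid ps (show 2*(k+1) = (2*k+1) + 1 by omega)]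
      ring
    · -- C
      rw [gFun_eq_zero ps (by omega), gFun_eq_zero ps (by omega),
          gFun_eq_zero ps (by omega)]
      ring


lemma sum_pInit_castSucc (d : ℕ) (hd : 0 < d) (ps : ℝ) :
    ∑ i : Fin d, pInit d ps (Fin.castSucc i) = 1 - ps := by
  rw [Finset.sum_congr rfl (fun i _ => pInit_castSucc d ps i), Finset.sum_const,
    Finset.card_univ, Fintype.card_fin, nsmul_eq_mul]
  have hd' : (d : ℝ) ≠ 0 := Nat.cast_ne_zero.mpr hd.ne'
  field_simp

lemma Fsum_etaExt (d : ℕ) (ps : ℝ) (η : Fin d → ℝ) (hη : ∑ i, η i = 1) (m n : ℕ) :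
    Fsum d (m + 1) ps η (etaExt d η) n = Fsum d m ps η (pInit d ps) n := by
  rw [Fsum_succ]
  simp only [etaExt_last, zero_mul, add_zero]
  rw [Finset.sum_congr rfl (fun i _ => etaExt_castSucc d η i), hη, one_mul]

lemma Fsum_pInit_eq (d : ℕ) (hd : 0 < d) (ps : ℝ) (η : Fin d → ℝ) (hη : ∑ i, η i = 1) :
    ∀ m n, Fsum d m ps η (pInit d ps) n = gFun ps m n := by
  intro m
  induction m using Nat.strong_induction_on with
  | _ m ih =>
    match m with
    | 0 =>
      intro n
      rw [Fsum_zero]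
      rcases n with _ | n
      · simp [gFun]
      · rw [if_neg (Nat.succ_ne_zero n), gFun, if_neg (Nat.succ_ne_zero n),
          if_neg (by omega), if_neg (by omega)]
    | 1 =>
      intro n
      rw [Fsum_succ, sum_pInit_castSucc d hd, pInit_last, Fsum_zero]
      rcases n with _ | n
      · simp [gFun]
      · rw [if_neg (Nat.succ_ne_zero n), if_neg (Nat.succ_ne_zero n), mul_zero, zero_add,
          Fsum_zero, Nat.add_sub_cancel]
        rcases n with _ | k
        · rw [if_pos rfl, mul_one, gFun_eq_mid ps (by omega), pow_one]
        · rw [if_neg (Nat.succ_ne_zero k), mul_zero, gFun_eq_zero ps (by omega)]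
    | (k+2) =>
      intro n
      rcases n with _ | n
      · rw [Fsum_succ, sum_pInit_castSucc d hd, pInit_last, if_pos rfl, mul_zero, add_zero,
          ih (k + 1) (by omega) 0]
        rw [gFun, if_pos rfl, gFun, if_pos rfl]
        ring
      · rw [Fsum_succ, sum_pInit_castSucc d hd, pInit_last, if_neg (Nat.succ_ne_zero n),
          Nat.add_sub_cancel, Fsum_etaExt d ps η hη k n, ih (k + 1) (by omega) (n + 1),
          ih k (by omega) n, g_rec ps k n]


/-- Exact law of the number of visits to state `d+1` for a chain `M_η ∈ G_{p⋆}`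
started from `p`; in particular it does not depend on `η`. -/
theorem visits_to_last_state_law
    (d m : ℕ) (hd : 2 ≤ d) (ps : ℝ) (hps : 0 < ps) (hps2 : ps ≤ 1 / (2 * ((d : ℝ) + 1)))
    (η : Fin d → ℝ) (hη : IsDist η) (n : ℕ) :
    (∑ x ∈ Finset.univ.filter (fun x : Fin m → Fin (d + 1) => Nlast d m x = n),
        trajP (MG d ps η) (pInit d ps) x) =
      if n = 0 then (1 - ps) ^ m
      else if 2 * n ≤ m then
        ps ^ n * (1 - ps) ^ (m - 2 * n) *
          (((m - n + 1).choose n : ℝ) - ps * ((m - n).choose (n - 1) : ℝ))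
      else if 2 * n = m + 1 then ps ^ n
      else 0 := by
  show Fsum d m ps η (pInit d ps) n = gFun ps m n
  exact Fsum_pInit_eq d (by omega) ps η hη.2 m n

end
end
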